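/- Let a ≥ 0 and let x, y : ℕ → ℝ satisfy 0 ≤ x_m ≤ a^m and 0 ≤ y_n ≤ a^n for all m, n ∈ ℕ. Then Σ ((m̃+ñ)!/(m! n! m̃! ñ!)) x_{m−1} y_n ≤ 2 e^{4a}, where the sum runs over all (m, n, m̃, ñ) ∈ ℕ⁴ with m ≥ 1 and m + n = m̃ + ñ (in particular the family is summable). -/

import Mathlib

/-- The summand of Lemma D.5, shifted-index case: for a quadruple `(m, n, m̃, ñ)`,
`((m̃+ñ)! / (m! n! m̃! ñ!)) * x (m-1) * y n`. -/
noncomputable def summandD5shift (x y : ℕ → ℝ) (q : ℕ × ℕ × ℕ × ℕ) : ℝ :=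
  ((q.2.2.1 + q.2.2.2).factorial : ℝ) /
    ((q.1.factorial : ℝ) * (q.2.1.factorial : ℝ) * (q.2.2.1.factorial : ℝ) *
      (q.2.2.2.factorial : ℝ)) * x (q.1 - 1) * y q.2.1

/-- Reindexing equivalence for Lemma D.5 (shifted case). -/
def equivD5shift : {q : ℕ × ℕ × ℕ × ℕ // 1 ≤ q.1 ∧ q.1 + q.2.1 = q.2.2.1 + q.2.2.2} ≃
    Σ p : ℕ × ℕ, Fin (p.1 + p.2 + 2) where
  toFun q := ⟨(q.1.1 - 1, q.1.2.1), ⟨q.1.2.2.1, by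
    obtain ⟨⟨m, n, mt, nt⟩, h1, h2⟩ := q
    dsimp only at h1 h2 ⊢
    omega⟩⟩
  invFun s := ⟨(s.1.1 + 1, s.1.2, s.2.1, s.1.1 + 1 + s.1.2 - s.2.1), by
    have := s.2.isLt
    dsimp only at this ⊢
    exact ⟨by omega, by omega⟩⟩
  left_inv q := by
    obtain ⟨⟨m, n, mt, nt⟩, h1, h2⟩ := q
    apply Subtype.ext
    dsimp only at h1 h2 ⊢
    simp only [Prod.mk.injEq, and_true, true_and]
    omega
  right_inv s := rfl

theorem summandD5shift_nonneg (x y : ℕ → ℝ) (hx0 : ∀ m, 0 ≤ x m) (hy0 : ∀ n, 0 ≤ y n)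
    (q : ℕ × ℕ × ℕ × ℕ) : 0 ≤ summandD5shift x y q := by
  unfold summandD5shift
  have h1 : (0:ℝ) ≤ ((q.2.2.1 + q.2.2.2).factorial : ℝ) := by positivity
  have h2 : (0:ℝ) ≤ (q.1.factorial : ℝ) * (q.2.1.factorial : ℝ) * (q.2.2.1.factorial : ℝ) *
      (q.2.2.2.factorial : ℝ) := by positivity
  exact mul_nonneg (mul_nonneg (div_nonneg h1 h2) (hx0 _)) (hy0 _)

/-- Lemma D.5 ('summation'), shifted-index case: if `0 ≤ x m ≤ a^m` and `0 ≤ y n ≤ a^n`,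
then `∑ ((m̃+ñ)!/(m! n! m̃! ñ!)) x_{m-1} y_n ≤ 2 e^{4a}`, the sum over quadruples with
`m ≥ 1` and `m + n = m̃ + ñ`. -/
theorem summation_lemma_shift (a : ℝ) (ha : 0 ≤ a) (x y : ℕ → ℝ)
    (hx0 : ∀ m, 0 ≤ x m) (hxa : ∀ m, x m ≤ a ^ m)
    (hy0 : ∀ n, 0 ≤ y n) (hya : ∀ n, y n ≤ a ^ n) :
    Summable (fun q : {q : ℕ × ℕ × ℕ × ℕ //
        1 ≤ q.1 ∧ q.1 + q.2.1 = q.2.2.1 + q.2.2.2} => summandD5shift x y q.1) ∧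
    ∑' q : {q : ℕ × ℕ × ℕ × ℕ // 1 ≤ q.1 ∧ q.1 + q.2.1 = q.2.2.1 + q.2.2.2},
      summandD5shift x y q.1 ≤ 2 * Real.exp (4 * a) := by
  classical
  -- the summand transported along the equivalence
  set f : (Σ p : ℕ × ℕ, Fin (p.1 + p.2 + 2)) → ℝ :=
    fun s => summandD5shift x y (equivD5shift.symm s).1 with hfdef
  have hfval : ∀ (m' n : ℕ) (k : Fin (m' + n + 2)),
      f ⟨(m', n), k⟩ = summandD5shift x y (m' + 1, n, k.1, m' + 1 + n - k.1) := fun _ _ _ => rfl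
  have hfnn : ∀ s, 0 ≤ f s := fun s => summandD5shift_nonneg x y hx0 hy0 _
  -- the fiberwise sums
  set S : ℕ × ℕ → ℝ := fun p => ∑' k : Fin (p.1 + p.2 + 2), f ⟨p, k⟩ with hSdef
  -- compute the fiberwise sums via the binomial theorem
  have hS : ∀ p : ℕ × ℕ,
      S p = x p.1 * y p.2 * 2 ^ (p.1 + p.2 + 1) /
        ((p.1 + 1).factorial * (p.2).factorial) := by
    rintro ⟨m', n⟩
    set N := m' + n + 1 with hN
    have hSfin : S (m', n) = ∑ k : Fin (N + 1), f ⟨(m', n), k⟩ := tsum_fintype _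
    have hterm : ∀ k : Fin (N + 1),
        f ⟨(m', n), k⟩ = (N.choose k.1 : ℝ) *
          (x m' * y n / ((m' + 1).factorial * n.factorial)) := by
      intro k
      have hk : (k : ℕ) ≤ N := by omega
      rw [hfval]
      unfold summandD5shift
      simp only
      have h1 : (k : ℕ) + (m' + 1 + n - k.1) = N := by omega
      have h2 : m' + 1 + n - k.1 = N - k.1 := by omega
      have h3 : m' + 1 - 1 = m' := by omega
      rw [h1, h2, h3]
      have hcf : (N.choose k.1 : ℝ) * (k.1.factorial : ℝ) * ((N - k.1).factorial : ℝ)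
          = (N.factorial : ℝ) := by
        exact_mod_cast congrArg (Nat.cast (R := ℝ))
          (Nat.choose_mul_factorial_mul_factorial hk)
      have hk1 : (k.1.factorial : ℝ) ≠ 0 := by positivity
      have hk2 : ((N - k.1).factorial : ℝ) ≠ 0 := by positivity
      have hk3 : ((m' + 1).factorial : ℝ) ≠ 0 := by positivity
      have hk4 : (n.factorial : ℝ) ≠ 0 := by positivity
      rw [← hcf]
      field_simp
    rw [hSfin]
    simp only [hterm]
    rw [← Finset.sum_mul]
    have hbin : ∑ k : Fin (N + 1), (N.choose k.1 : ℝ) = (2 : ℝ) ^ N := by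
      rw [Fin.sum_univ_eq_sum_range (fun i => (N.choose i : ℝ))]
      exact_mod_cast congrArg (Nat.cast (R := ℝ)) (Nat.sum_range_choose N)
    rw [hbin]
    field_simp
  -- the dominating function
  set u : ℕ → ℝ := fun m => 2 * ((2 * a) ^ m / m.factorial) with hudef
  set v : ℕ → ℝ := fun n => (2 * a) ^ n / n.factorial with hvdef
  have hu : Summable u := (Real.summable_pow_div_factorial (2 * a)).mul_left 2
  have hv : Summable v := Real.summable_pow_div_factorial (2 * a)
  have hunn : ∀ m, 0 ≤ u m := fun m => by positivity
  have hvnn : ∀ n, 0 ≤ v n := fun n => by positivity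
  set F : ℕ × ℕ → ℝ := fun p => u p.1 * v p.2 with hFdef
  have hF : Summable F := hu.mul_of_nonneg hv hunn hvnn
  -- fiberwise sums are dominated
  have hSle : ∀ p : ℕ × ℕ, S p ≤ F p := by
    rintro ⟨m', n⟩
    rw [hS ⟨m', n⟩]
    simp only [hFdef, hudef, hvdef]
    have hxy : x m' * y n ≤ a ^ m' * a ^ n :=
      mul_le_mul (hxa m') (hya n) (hy0 n) (by positivity)
    have hfac : ((m').factorial : ℝ) ≤ ((m' + 1).factorial : ℝ) := by
      exact_mod_cast Nat.factorial_le (by omega)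
    calc x m' * y n * 2 ^ (m' + n + 1) / ((m' + 1).factorial * n.factorial)
        ≤ a ^ m' * a ^ n * 2 ^ (m' + n + 1) / ((m' + 1).factorial * n.factorial) := by
          gcongr
      _ ≤ a ^ m' * a ^ n * 2 ^ (m' + n + 1) / ((m').factorial * n.factorial) := by
          gcongr
      _ = 2 * ((2 * a) ^ m' / (m').factorial) * ((2 * a) ^ n / n.factorial) := by
          rw [mul_pow, mul_pow]
          have : (2:ℝ) ^ (m' + n + 1) = 2 * 2 ^ m' * 2 ^ n := by
            rw [pow_add, pow_add, pow_one]; ring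
          rw [this]
          field_simp
  have hSnn : ∀ p, 0 ≤ S p := fun p => tsum_nonneg fun k => hfnn _
  have hSsum : Summable S := hF.of_nonneg_of_le hSnn hSle
  -- summability over the sigma type
  have hfsum : Summable f := by
    refine (summable_sigma_of_nonneg hfnn).2 ⟨fun p => ?_, hSsum⟩
    exact Summable.of_finite
  -- value of the dominating sum
  have hvt : ∑' n, v n = Real.exp (2 * a) := by
    rw [Real.exp_eq_exp_ℝ, NormedSpace.exp_eq_tsum_div]
  have hut : ∑' m, u m = 2 * Real.exp (2 * a) := by
    rw [hudef, tsum_mul_left, hvt]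
  have hFt : ∑' p, F p = 2 * Real.exp (4 * a) := by
    rw [hFdef, ← hu.tsum_mul_tsum hv hF, hut, hvt, mul_assoc, ← Real.exp_add]
    ring_nf
  -- transport along the equivalence
  have hequiv : (fun q : {q : ℕ × ℕ × ℕ × ℕ //
      1 ≤ q.1 ∧ q.1 + q.2.1 = q.2.2.1 + q.2.2.2} => summandD5shift x y q.1)
      ∘ equivD5shift.symm = f := rfl
  have hsub : Summable (fun q : {q : ℕ × ℕ × ℕ × ℕ //
      1 ≤ q.1 ∧ q.1 + q.2.1 = q.2.2.1 + q.2.2.2} => summandD5shift x y q.1) := by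
    rw [← equivD5shift.symm.summable_iff, hequiv]
    exact hfsum
  refine ⟨hsub, ?_⟩
  have htsum_eq : ∑' q : {q : ℕ × ℕ × ℕ × ℕ // 1 ≤ q.1 ∧ q.1 + q.2.1 = q.2.2.1 + q.2.2.2},
      summandD5shift x y q.1 = ∑' s, f s := by
    rw [← equivD5shift.symm.tsum_eq]
  rw [htsum_eq, hfsum.tsum_sigma]
  calc ∑' p : ℕ × ℕ, S p ≤ ∑' p, F p := Summable.tsum_le_tsum hSle hSsum hF
    _ = 2 * Real.exp (4 * a) := hFt
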